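/- arXiv:1406.5579 — 2 statements merged into one kernel-verified Lean document; each statement's English description precedes it below -/
import Mathlib

section
/- In the Lie algebra sl_2^Λ, the subspace R = Fz_0 ⊕ ⋯ ⊕ Fz_Λ equals the derived ideal's intersection with the radical; more concretely, R is a nilpotent ideal, and it is the unique maximal nilpotent ideal (the nil radical) of sl_2^Λ. -/
/-- A presentation of the Lie algebra `sl₂^Λ` over `F`: a Lie algebra with a basis
`e, h, f` (the `Fin 3` part, `0 ↦ e`, `1 ↦ h`, `2 ↦ f`) and `z_0, …, z_Λ`, subject to the
relations `[h,e] = 2e`, `[h,f] = −2f`, `[e,f] = h`, `[z_j, z_{j'}] = 0`,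
`[h,z_j] = (Λ−2j)z_j`, `[f,z_j] = z_{j+1}` (with `z_{Λ+1} := 0`) and
`[e,z_j] = j(Λ−j+1)z_{j−1}`. -/
structure SL2Lam (F : Type) [Field F] (Λ : ℕ) where
  carrier : Type
  [lieRing : LieRing carrier]
  [lieAlgebra : LieAlgebra F carrier]
  basis : Module.Basis (Fin 3 ⊕ Fin (Λ + 1)) F carrier
  rel_he : ⁅basis (Sum.inl 1), basis (Sum.inl 0)⁆ = 2 • basis (Sum.inl 0)
  rel_hf : ⁅basis (Sum.inl 1), basis (Sum.inl 2)⁆ = -(2 • basis (Sum.inl 2))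
  rel_ef : ⁅basis (Sum.inl 0), basis (Sum.inl 2)⁆ = basis (Sum.inl 1)
  rel_zz : ∀ j j' : Fin (Λ + 1), ⁅basis (Sum.inr j), basis (Sum.inr j')⁆ = 0
  rel_hz : ∀ j : Fin (Λ + 1),
    ⁅basis (Sum.inl 1), basis (Sum.inr j)⁆ = ((Λ : ℤ) - 2 * (j : ℕ)) • basis (Sum.inr j)
  rel_fz : ∀ (j : ℕ) (hj : j < Λ),
    ⁅basis (Sum.inl 2), basis (Sum.inr ⟨j, by omega⟩)⁆ = basis (Sum.inr ⟨j + 1, by omega⟩)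
  rel_fzTop : ⁅basis (Sum.inl 2), basis (Sum.inr ⟨Λ, by omega⟩)⁆ = 0
  rel_ez : ∀ (j : ℕ) (hj : j ≤ Λ),
    ⁅basis (Sum.inl 0), basis (Sum.inr ⟨j, by omega⟩)⁆
      = (j * (Λ - j + 1)) • basis (Sum.inr ⟨j - 1, by omega⟩)


attribute [instance] SL2Lam.lieRing SL2Lam.lieAlgebra

namespace SL2LamAux

variable {F : Type} [Field F] {Λ : ℕ} (P : SL2Lam F Λ)

/-- The span of the `z_j`. -/
noncomputable def S : Submodule F P.carrier :=
  Submodule.span F (Set.range fun j : Fin (Λ + 1) => P.basis (Sum.inr j))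

lemma z_mem (j : Fin (Λ + 1)) : P.basis (Sum.inr j) ∈ S P :=
  Submodule.subset_span ⟨j, rfl⟩

lemma mem_S_iff (x : P.carrier) :
    x ∈ S P ↔ ∀ i : Fin 3, P.basis.repr x (Sum.inl i) = 0 := by
  have hset : (Set.range fun j : Fin (Λ + 1) => P.basis (Sum.inr j))
      = P.basis '' (Set.range Sum.inr) := by
    ext m; constructor
    · rintro ⟨j, rfl⟩; exact ⟨Sum.inr j, ⟨j, rfl⟩, rfl⟩
    · rintro ⟨a, ⟨j, rfl⟩, rfl⟩; exact ⟨j, rfl⟩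
  rw [S, hset, Module.Basis.mem_span_image]
  constructor
  · intro h i
    by_contra hne
    obtain ⟨j, hj⟩ := h (Finsupp.mem_support_iff.2 hne)
    exact Sum.inr_ne_inl hj
  · intro h a ha
    rcases a with i | j
    · exact absurd (Finsupp.mem_support_iff.1 ha) (not_not.2 (h i))
    · exact ⟨j, rfl⟩

lemma lie_z_mem (x : P.carrier) (j : Fin (Λ + 1)) :
    ⁅x, P.basis (Sum.inr j)⁆ ∈ S P := by
  have hx : x ∈ Submodule.span F (Set.range P.basis) := by
    rw [P.basis.span_eq]; trivial
  induction hx using Submodule.span_induction with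
  | mem y hy =>
    obtain ⟨i, rfl⟩ := hy
    rcases i with k | j'
    · fin_cases k
      · show ⁅P.basis (Sum.inl 0), P.basis (Sum.inr j)⁆ ∈ S P
        have h := P.rel_ez j.1 (Nat.lt_succ_iff.mp j.isLt)
        simp only [Fin.eta] at h
        rw [h]
        exact nsmul_mem (z_mem P _) _
      · show ⁅P.basis (Sum.inl 1), P.basis (Sum.inr j)⁆ ∈ S P
        rw [P.rel_hz j]
        exact zsmul_mem (z_mem P _) _
      · show ⁅P.basis (Sum.inl 2), P.basis (Sum.inr j)⁆ ∈ S P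
        by_cases hj : (j : ℕ) < Λ
        · have h := P.rel_fz j.1 hj
          simp only [Fin.eta] at h
          rw [h]
          exact z_mem P _
        · have hjΛ : j = ⟨Λ, by omega⟩ := by
            ext; have := j.isLt; simp; omega
          rw [hjΛ, P.rel_fzTop]
          exact zero_mem _
    · rw [P.rel_zz j' j]
      exact zero_mem _
  | zero => rw [zero_lie]; exact zero_mem _
  | add y z _ _ hy hz => rw [add_lie]; exact add_mem hy hz
  | smul a y _ hy => rw [smul_lie]; exact Submodule.smul_mem _ _ hy

lemma z_lie_mem (j : Fin (Λ + 1)) (x : P.carrier) :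
    ⁅P.basis (Sum.inr j), x⁆ ∈ S P := by
  rw [← lie_skew]
  exact neg_mem (lie_z_mem P x j)

lemma S_lie (x : P.carrier) {m : P.carrier} (hm : m ∈ S P) : ⁅x, m⁆ ∈ S P := by
  induction hm using Submodule.span_induction with
  | mem y hy => obtain ⟨j, rfl⟩ := hy; exact lie_z_mem P x j
  | zero => rw [lie_zero]; exact zero_mem _
  | add y z _ _ hy hz => rw [lie_add]; exact add_mem hy hz
  | smul a y _ hy => rw [lie_smul]; exact Submodule.smul_mem _ _ hy

lemma S_abelian {x y : P.carrier} (hx : x ∈ S P) (hy : y ∈ S P) : ⁅x, y⁆ = 0 := by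
  induction hx using Submodule.span_induction with
  | mem a ha =>
    obtain ⟨j, rfl⟩ := ha
    induction hy using Submodule.span_induction with
    | mem b hb => obtain ⟨j', rfl⟩ := hb; exact P.rel_zz j j'
    | zero => exact lie_zero _
    | add u v _ _ hu hv => rw [lie_add, hu, hv, add_zero]
    | smul a u _ hu => rw [lie_smul, hu, smul_zero]
  | zero => exact zero_lie _
  | add u v _ _ hu hv => rw [add_lie, hu, hv, add_zero]
  | smul a u _ hu => rw [smul_lie, hu, smul_zero]

/-- The bracket as a bilinear map. -/
noncomputable def brkt : P.carrier →ₗ[F] P.carrier →ₗ[F] P.carrier :=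
  LinearMap.mk₂ F (fun x y => ⁅x, y⁆) add_lie smul_lie lie_add lie_smul

@[simp] lemma brkt_apply (x y : P.carrier) : brkt P x y = ⁅x, y⁆ := rfl

/-- The `e`, `h`, `f` coordinate functionals. -/
noncomputable def cf (i : Fin 3) : P.carrier →ₗ[F] F := P.basis.coord (Sum.inl i)

lemma cf_apply (i : Fin 3) (x : P.carrier) : cf P i x = P.basis.repr x (Sum.inl i) := rfl

lemma cf_S {i : Fin 3} {x : P.carrier} (hx : x ∈ S P) : cf P i x = 0 := by
  rw [cf_apply]
  exact (mem_S_iff P x).1 hx i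

@[simp] lemma cf_z (i : Fin 3) (j : Fin (Λ + 1)) : cf P i (P.basis (Sum.inr j)) = 0 :=
  cf_S P (z_mem P j)

/-- Generic right-hand side bilinear map for the coefficient formulas. -/
noncomputable def q (i₁ i₂ : Fin 3) (c : F) : P.carrier →ₗ[F] P.carrier →ₗ[F] F :=
  LinearMap.mk₂ F (fun x y => c * (cf P i₁ x * cf P i₂ y - cf P i₂ x * cf P i₁ y))
    (by intros; simp only [map_add]; ring)
    (by intros; simp only [map_smul, smul_eq_mul]; ring)
    (by intros; simp only [map_add]; ring)
    (by intros; simp only [map_smul, smul_eq_mul]; ring)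

@[simp] lemma q_apply (i₁ i₂ : Fin 3) (c : F) (x y : P.carrier) :
    q P i₁ i₂ c x y = c * (cf P i₁ x * cf P i₂ y - cf P i₂ x * cf P i₁ y) := rfl

lemma key_aux (i i₁ i₂ : Fin 3) (c : F)
    (hb : ∀ k k' : Fin 3,
      cf P i ⁅P.basis (Sum.inl k), P.basis (Sum.inl k')⁆
        = c * (cf P i₁ (P.basis (Sum.inl k)) * cf P i₂ (P.basis (Sum.inl k'))
            - cf P i₂ (P.basis (Sum.inl k)) * cf P i₁ (P.basis (Sum.inl k')))) :
    ∀ x y : P.carrier,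
      cf P i ⁅x, y⁆ = c * (cf P i₁ x * cf P i₂ y - cf P i₂ x * cf P i₁ y) := by
  have heq : (brkt P).compr₂ (cf P i) = q P i₁ i₂ c := by
    apply LinearMap.ext_basis P.basis P.basis
    rintro (k | j) (k' | j')
    · simpa only [LinearMap.compr₂_apply, brkt_apply, q_apply] using hb k k'
    · have h0 : cf P i ⁅P.basis (Sum.inl k), P.basis (Sum.inr j')⁆ = 0 :=
        cf_S P (lie_z_mem P _ _)
      simp only [LinearMap.compr₂_apply, brkt_apply, q_apply, h0, cf_z]
      ring
    · have h0 : cf P i ⁅P.basis (Sum.inr j), P.basis (Sum.inl k')⁆ = 0 :=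
        cf_S P (z_lie_mem P _ _)
      simp only [LinearMap.compr₂_apply, brkt_apply, q_apply, h0, cf_z]
      ring
    · simp only [LinearMap.compr₂_apply, brkt_apply, q_apply, P.rel_zz, map_zero, cf_z]
      ring
  intro x y
  simpa only [LinearMap.compr₂_apply, brkt_apply, q_apply] using
    LinearMap.congr_fun (LinearMap.congr_fun heq x) y

@[simp] lemma cf_basis (i k : Fin 3) :
    cf P i (P.basis (Sum.inl k)) = if k = i then 1 else 0 := by
  simp [cf_apply, Module.Basis.repr_self, Finsupp.single_apply, Sum.inl.injEq]

lemma lie_eh : ⁅P.basis (Sum.inl 0), P.basis (Sum.inl 1)⁆ = -(2 • P.basis (Sum.inl 0)) := by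
  rw [← lie_skew, P.rel_he]

lemma lie_fe : ⁅P.basis (Sum.inl 2), P.basis (Sum.inl 0)⁆ = -P.basis (Sum.inl 1) := by
  rw [← lie_skew, P.rel_ef]

lemma lie_fh : ⁅P.basis (Sum.inl 2), P.basis (Sum.inl 1)⁆ = 2 • P.basis (Sum.inl 2) := by
  rw [← lie_skew, P.rel_hf, neg_neg]

lemma cf0_lie (x y : P.carrier) :
    cf P 0 ⁅x, y⁆ = 2 * (cf P 1 x * cf P 0 y - cf P 0 x * cf P 1 y) := by
  refine key_aux P 0 1 0 2 (fun k k' => ?_) x y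
  fin_cases k <;> fin_cases k' <;>
    simp [lie_self, P.rel_he, P.rel_hf, P.rel_ef, lie_eh P, lie_fe P, lie_fh P]

lemma cf1_lie (x y : P.carrier) :
    cf P 1 ⁅x, y⁆ = 1 * (cf P 0 x * cf P 2 y - cf P 2 x * cf P 0 y) := by
  refine key_aux P 1 0 2 1 (fun k k' => ?_) x y
  fin_cases k <;> fin_cases k' <;>
    simp [lie_self, P.rel_he, P.rel_hf, P.rel_ef, lie_eh P, lie_fe P, lie_fh P]

lemma cf2_lie (x y : P.carrier) :
    cf P 2 ⁅x, y⁆ = 2 * (cf P 2 x * cf P 1 y - cf P 1 x * cf P 2 y) := by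
  refine key_aux P 2 2 1 2 (fun k k' => ?_) x y
  fin_cases k <;> fin_cases k' <;>
    simp [lie_self, P.rel_he, P.rel_hf, P.rel_ef, lie_eh P, lie_fe P, lie_fh P]

lemma no_e [CharZero F] {J : LieIdeal F P.carrier} (hJ : LieRing.IsNilpotent J)
    {u : P.carrier} (hu : u ∈ J) (hB : cf P 1 u = 0) (hC : cf P 2 u = 0)
    (hA : cf P 0 u ≠ 0) : False := by
  classical
  have hvJ : ⁅P.basis (Sum.inl 2), u⁆ ∈ J := J.lie_mem hu
  set v := ⁅P.basis (Sum.inl 2), u⁆ with hv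
  have hAv : cf P 0 v = 0 := by rw [hv, cf0_lie]; simp [hB]
  have hBv : cf P 1 v = -cf P 0 u := by rw [hv, cf1_lie]; simp
  have hCv : cf P 2 v = 0 := by rw [hv, cf2_lie]; simp [hB]
  haveI := hJ
  obtain ⟨k, hk⟩ := LieAlgebra.nilpotent_ad_of_nilpotent_algebra F J
  set vv : J := ⟨v, hvJ⟩ with hvv
  set uu : J := ⟨u, hu⟩ with huu
  have coe_br : ∀ (a w : J), ((⁅a, w⁆ : J) : P.carrier) = ⁅(a : P.carrier), (w : P.carrier)⁆ :=
    fun a w => rfl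
  have main : ∀ n : ℕ,
      cf P 0 ((((LieAlgebra.ad F J vv) ^ n) uu : J) : P.carrier)
          = (2 * cf P 1 v) ^ n * cf P 0 u
        ∧ cf P 1 ((((LieAlgebra.ad F J vv) ^ n) uu : J) : P.carrier) = 0
        ∧ cf P 2 ((((LieAlgebra.ad F J vv) ^ n) uu : J) : P.carrier) = 0 := by
    intro n
    induction n with
    | zero => simp [huu, hB, hC]
    | succ n ih =>
      obtain ⟨h0, h1, h2⟩ := ih
      have hco : ((((LieAlgebra.ad F J vv) ^ (n + 1)) uu : J) : P.carrier)
          = ⁅v, ((((LieAlgebra.ad F J vv) ^ n) uu : J) : P.carrier)⁆ := by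
        rw [pow_succ', Module.End.mul_apply, LieAlgebra.ad_apply, coe_br]
      refine ⟨?_, ?_, ?_⟩ <;> rw [hco]
      · rw [cf0_lie, h0, h1, hAv]; ring
      · rw [cf1_lie, hAv, hCv]; ring
      · rw [cf2_lie, hCv, h2]; ring
  have h0 := (main k).1
  rw [hk vv] at h0
  simp only [LinearMap.zero_apply, ZeroMemClass.coe_zero, map_zero] at h0
  have h2 : (2 : F) * cf P 1 v ≠ 0 := by
    rw [hBv]
    exact mul_ne_zero two_ne_zero (neg_ne_zero.2 hA)
  exact (mul_ne_zero (pow_ne_zero k h2) hA) h0.symm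

lemma nilpotent_le_S [CharZero F] {J : LieIdeal F P.carrier}
    (hJ : LieRing.IsNilpotent J) {x : P.carrier} (hx : x ∈ J) : x ∈ S P := by
  have key : ∀ y ∈ J, cf P 0 y = 0 ∧ cf P 1 y = 0 ∧ cf P 2 y = 0 := by
    intro y hy
    by_cases hC : cf P 2 y = 0
    · by_cases hB : cf P 1 y = 0
      · by_cases hA : cf P 0 y = 0
        · exact ⟨hA, hB, hC⟩
        · exact absurd (no_e P hJ hy hB hC hA) not_false
      · -- u = ⁅e, y⁆ has A = -2 * B y ≠ 0, B = C y = 0, C = 0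
        exfalso
        have hu : ⁅P.basis (Sum.inl 0), y⁆ ∈ J := J.lie_mem hy
        have hAu : cf P 0 ⁅P.basis (Sum.inl 0), y⁆ = -2 * cf P 1 y := by
          rw [cf0_lie]; simp
        have hBu : cf P 1 ⁅P.basis (Sum.inl 0), y⁆ = 0 := by
          rw [cf1_lie]; simp [hC]
        have hCu : cf P 2 ⁅P.basis (Sum.inl 0), y⁆ = 0 := by
          rw [cf2_lie]; simp
        refine no_e P hJ hu hBu hCu ?_
        rw [hAu]
        exact mul_ne_zero (by norm_num) hB
    · -- u = ⁅e, ⁅e, y⁆⁆ has A = -2 * C y ≠ 0, B = 0, C = 0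
      exfalso
      have hy1 : ⁅P.basis (Sum.inl 0), y⁆ ∈ J := J.lie_mem hy
      have hB1 : cf P 1 ⁅P.basis (Sum.inl 0), y⁆ = cf P 2 y := by
        rw [cf1_lie]; simp
      have hC1 : cf P 2 ⁅P.basis (Sum.inl 0), y⁆ = 0 := by
        rw [cf2_lie]; simp
      have hu : ⁅P.basis (Sum.inl 0), ⁅P.basis (Sum.inl 0), y⁆⁆ ∈ J := J.lie_mem hy1
      have hAu : cf P 0 ⁅P.basis (Sum.inl 0), ⁅P.basis (Sum.inl 0), y⁆⁆
          = -2 * cf P 2 y := by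
        rw [cf0_lie, hB1]; simp
      have hBu : cf P 1 ⁅P.basis (Sum.inl 0), ⁅P.basis (Sum.inl 0), y⁆⁆ = 0 := by
        rw [cf1_lie]; simp [hC1]
      have hCu : cf P 2 ⁅P.basis (Sum.inl 0), ⁅P.basis (Sum.inl 0), y⁆⁆ = 0 := by
        rw [cf2_lie]; simp
      refine no_e P hJ hu hBu hCu ?_
      rw [hAu]
      exact mul_ne_zero (by norm_num) hC
  obtain ⟨h0, h1, h2⟩ := key x hx
  rw [mem_S_iff]
  intro i
  fin_cases i
  · exact h0
  · exact h1
  · exact h2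

end SL2LamAux

open SL2LamAux

/-- In `sl₂^Λ`, the subspace `R = Fz_0 ⊕ ⋯ ⊕ Fz_Λ` is a nilpotent ideal and
it is the unique maximal nilpotent ideal (the nil radical) of `sl₂^Λ`. -/
theorem sl2Lam_nilradical
    (F : Type) [Field F] [CharZero F] (Λ : ℕ) (hΛ : 1 ≤ Λ) (P : SL2Lam F Λ) :
    ∃ R : LieIdeal F P.carrier,
      (R : Submodule F P.carrier)
        = Submodule.span F (Set.range fun j : Fin (Λ + 1) => P.basis (Sum.inr j)) ∧
      LieRing.IsNilpotent R ∧
      (∀ J : LieIdeal F P.carrier, LieRing.IsNilpotent J → J ≤ R) := by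
  refine ⟨{ S P with lie_mem := fun {x m} hm => S_lie P x hm }, rfl, ?_, ?_⟩
  · haveI : IsLieAbelian
        (↥({ S P with lie_mem := fun {x m} hm => S_lie P x hm } : LieIdeal F P.carrier)) :=
      ⟨fun a b => Subtype.ext (S_abelian P a.2 b.2)⟩
    infer_instance
  · intro J hJ x hx
    exact nilpotent_le_S P hJ hx
end

section
/- The Lie algebra sl_2^Λ is not reductive: its radical R = Fz_0 ⊕ ⋯ ⊕ Fz_Λ is nonzero and is not contained in the center of sl_2^Λ; in fact the center of sl_2^Λ is trivial. -/
namespace SL2Aux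

variable {F : Type} [Field F] {Λ : ℕ} (P : SL2Lam F Λ)

/-- The projection to the `e, h, f` coordinates. -/
noncomputable def p : P.carrier →ₗ[F] (Fin 3 → F) :=
  LinearMap.pi fun i => P.basis.coord (Sum.inl i)

/-- The span of the `z_j`. -/
noncomputable def Z : Submodule F P.carrier :=
  Submodule.span F (Set.range fun j : Fin (Λ + 1) => P.basis (Sum.inr j))

lemma p_apply (x : P.carrier) (i : Fin 3) : p P x i = P.basis.repr x (Sum.inl i) := rfl

lemma p_basis_inr (j : Fin (Λ + 1)) : p P (P.basis (Sum.inr j)) = 0 := by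
  funext i
  simp [p_apply, Module.Basis.repr_self, Finsupp.single_apply]

lemma p_basis_inl (m : Fin 3) :
    p P (P.basis (Sum.inl m)) = fun i => if m = i then 1 else 0 := by
  funext i
  simp [p_apply, Module.Basis.repr_self, Finsupp.single_apply]

lemma z_mem (j : Fin (Λ + 1)) : P.basis (Sum.inr j) ∈ Z P :=
  Submodule.subset_span ⟨j, rfl⟩

lemma p_eq_zero_of_mem {x : P.carrier} (hx : x ∈ Z P) : p P x = 0 := by
  have h : Z P ≤ LinearMap.ker (p P) := by
    rw [Z, Submodule.span_le]
    rintro - ⟨j, rfl⟩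
    simp only [SetLike.mem_coe, LinearMap.mem_ker, p_basis_inr]
  exact h hx

lemma mem_of_p_eq_zero {x : P.carrier} (hx : p P x = 0) : x ∈ Z P := by
  have : Set.range (fun j : Fin (Λ + 1) => P.basis (Sum.inr j))
      = P.basis '' (Set.range Sum.inr) := by
    rw [← Set.range_comp]; rfl
  rw [Z, this, Module.Basis.mem_span_image]
  intro k hk
  rcases k with i | j
  · exfalso
    have := congrFun hx i
    rw [p_apply] at this
    simp [this] at hk
  · exact ⟨j, rfl⟩


lemma lie_basis_z_mem (i : Fin 3 ⊕ Fin (Λ + 1)) (j : Fin (Λ + 1)) :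
    ⁅P.basis i, P.basis (Sum.inr j)⁆ ∈ Z P := by
  obtain ⟨jv, hjv⟩ := j
  rcases i with m | j'
  · fin_cases m
    · show ⁅P.basis (Sum.inl 0), P.basis (Sum.inr ⟨jv, hjv⟩)⁆ ∈ Z P
      rw [P.rel_ez jv (by omega)]
      exact nsmul_mem (z_mem P _) _
    · show ⁅P.basis (Sum.inl 1), P.basis (Sum.inr ⟨jv, hjv⟩)⁆ ∈ Z P
      rw [P.rel_hz ⟨jv, hjv⟩]
      exact zsmul_mem (z_mem P _) _
    · show ⁅P.basis (Sum.inl 2), P.basis (Sum.inr ⟨jv, hjv⟩)⁆ ∈ Z P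
      rcases lt_or_ge jv Λ with h | h
      · rw [P.rel_fz jv h]
        exact z_mem P _
      · have hj : jv = Λ := by omega
        subst hj
        rw [P.rel_fzTop]
        exact zero_mem _
  · rw [P.rel_zz j' ⟨jv, hjv⟩]
    exact zero_mem _

lemma lie_z_mem (x : P.carrier) {m : P.carrier} (hm : m ∈ Z P) : ⁅x, m⁆ ∈ Z P := by
  induction hm using Submodule.span_induction with
  | mem y hy =>
    obtain ⟨j, rfl⟩ := hy
    have hx : x ∈ Submodule.span F (Set.range P.basis) := by
      rw [P.basis.span_eq]; trivial
    induction hx using Submodule.span_induction with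
    | mem y' hy' =>
      obtain ⟨i, rfl⟩ := hy'
      exact lie_basis_z_mem P i j
    | zero => rw [zero_lie]; exact zero_mem _
    | add a b _ _ ha hb => rw [add_lie]; exact add_mem ha hb
    | smul c a _ ha => rw [smul_lie]; exact Submodule.smul_mem _ _ ha
  | zero => rw [lie_zero]; exact zero_mem _
  | add a b _ _ ha hb => rw [lie_add]; exact add_mem ha hb
  | smul c a _ ha => rw [lie_smul]; exact Submodule.smul_mem _ _ ha

/-- `Z` as a Lie ideal. -/
noncomputable def Rideal : LieIdeal F P.carrier :=
  { Z P with lie_mem := fun {x m} hm => lie_z_mem P x hm }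

lemma Rideal_coe : (Rideal P : Submodule F P.carrier) = Z P := rfl

lemma mem_Rideal_iff {x : P.carrier} : x ∈ Rideal P ↔ x ∈ Z P := Iff.rfl


def br (u v : Fin 3 → F) : Fin 3 → F :=
  ![2*(u 1 * v 0 - u 0 * v 1), u 0 * v 2 - u 2 * v 0, 2*(u 2 * v 1 - u 1 * v 2)]

lemma br_add (u v w : Fin 3 → F) : br u (v + w) = br u v + br u w := by
  funext i; fin_cases i <;> simp [br] <;> ring

lemma add_br (u v w : Fin 3 → F) : br (u + v) w = br u w + br v w := by
  funext i; fin_cases i <;> simp [br] <;> ring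

lemma br_smul (c : F) (u v : Fin 3 → F) : br u (c • v) = c • br u v := by
  funext i; fin_cases i <;> simp [br, mul_comm, mul_left_comm] <;> ring

lemma smul_br (c : F) (u v : Fin 3 → F) : br (c • u) v = c • br u v := by
  funext i; fin_cases i <;> simp [br, mul_comm, mul_left_comm] <;> ring

lemma br_zero (u : Fin 3 → F) : br u 0 = 0 := by
  funext i; fin_cases i <;> simp [br]

lemma zero_br (u : Fin 3 → F) : br 0 u = 0 := by
  funext i; fin_cases i <;> simp [br]

lemma p_bracket_basis (i j : Fin 3 ⊕ Fin (Λ + 1)) :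
    p P ⁅P.basis i, P.basis j⁆ = br (p P (P.basis i)) (p P (P.basis j)) := by
  rcases j with m2 | j2
  · rcases i with m1 | j1
    · fin_cases m1 <;> fin_cases m2
      · show p P ⁅P.basis (Sum.inl 0), P.basis (Sum.inl 0)⁆ = _
        rw [lie_self]
        funext i; fin_cases i <;> simp [br, p_basis_inl]
      · show p P ⁅P.basis (Sum.inl 0), P.basis (Sum.inl 1)⁆ = _
        rw [← lie_skew, P.rel_he]
        funext i; fin_cases i <;> simp [br, p_basis_inl]
      · show p P ⁅P.basis (Sum.inl 0), P.basis (Sum.inl 2)⁆ = _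
        rw [P.rel_ef]
        funext i; fin_cases i <;> simp [br, p_basis_inl]
      · show p P ⁅P.basis (Sum.inl 1), P.basis (Sum.inl 0)⁆ = _
        rw [P.rel_he]
        funext i; fin_cases i <;> simp [br, p_basis_inl]
      · show p P ⁅P.basis (Sum.inl 1), P.basis (Sum.inl 1)⁆ = _
        rw [lie_self]
        funext i; fin_cases i <;> simp [br, p_basis_inl]
      · show p P ⁅P.basis (Sum.inl 1), P.basis (Sum.inl 2)⁆ = _
        rw [P.rel_hf]
        funext i; fin_cases i <;> simp [br, p_basis_inl]
      · show p P ⁅P.basis (Sum.inl 2), P.basis (Sum.inl 0)⁆ = _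
        rw [← lie_skew, P.rel_ef]
        funext i; fin_cases i <;> simp [br, p_basis_inl]
      · show p P ⁅P.basis (Sum.inl 2), P.basis (Sum.inl 1)⁆ = _
        rw [← lie_skew, P.rel_hf]
        funext i; fin_cases i <;> simp [br, p_basis_inl]
      · show p P ⁅P.basis (Sum.inl 2), P.basis (Sum.inl 2)⁆ = _
        rw [lie_self]
        funext i; fin_cases i <;> simp [br, p_basis_inl]
    · rw [← lie_skew, map_neg, p_eq_zero_of_mem P (lie_basis_z_mem P _ j1),
        p_basis_inr, zero_br, neg_zero]
  · rw [p_eq_zero_of_mem P (lie_basis_z_mem P i j2), p_basis_inr, br_zero]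

lemma p_bracket (x y : P.carrier) : p P ⁅x, y⁆ = br (p P x) (p P y) := by
  have hy : y ∈ Submodule.span F (Set.range P.basis) := by rw [P.basis.span_eq]; trivial
  induction hy using Submodule.span_induction with
  | mem w hw =>
    obtain ⟨j, rfl⟩ := hw
    have hx : x ∈ Submodule.span F (Set.range P.basis) := by rw [P.basis.span_eq]; trivial
    induction hx using Submodule.span_induction with
    | mem v hv => obtain ⟨i, rfl⟩ := hv; exact p_bracket_basis P i j
    | zero => rw [zero_lie, map_zero]; rw [zero_br]
    | add a b _ _ ha hb => rw [add_lie, map_add, map_add, ha, hb, add_br]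
    | smul c a _ ha => rw [smul_lie, map_smul, map_smul, ha, smul_br]
  | zero => rw [lie_zero, map_zero]; rw [br_zero]
  | add a b _ _ ha hb => rw [lie_add, map_add, map_add, ha, hb, br_add]
  | smul c a _ ha => rw [lie_smul, map_smul, map_smul, ha, br_smul]


def vE : Fin 3 → F := ![1, 0, 0]
def vH : Fin 3 → F := ![0, 1, 0]
def vF : Fin 3 → F := ![0, 0, 1]

section Sl2

variable [CharZero F]

lemma two_ne : (2 : F) ≠ 0 := two_ne_zero

lemma br_stable_top (W : Submodule F (Fin 3 → F))
    (hW : ∀ v w, w ∈ W → br v w ∈ W) (hne : W ≠ ⊥) : W = ⊤ := by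
  obtain ⟨w, hwW, hw0⟩ : ∃ w ∈ W, w ≠ 0 := by
    by_contra h
    push_neg at h
    exact hne (by rw [eq_bot_iff]; intro m hm; exact h m hm)
  have f1 : br (vF : Fin 3 → F) (br vF w) = (-2 * w 0) • vF := by
    funext i; fin_cases i <;> simp [br, vF] <;> ring
  have f2 : br (vE : Fin 3 → F) (br vE w) = (-2 * w 2) • vE := by
    funext i; fin_cases i <;> simp [br, vE] <;> ring
  have f3 : br (vE : Fin 3 → F) vF = vH := by
    funext i; fin_cases i <;> simp [br, vE, vF, vH]
  have f4 : br (vF : Fin 3 → F) vE = -vH := by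
    funext i; fin_cases i <;> simp [br, vE, vF, vH]
  have f5 : br (vE : Fin 3 → F) vH = (-2 : F) • vE := by
    funext i; fin_cases i <;> simp [br, vE, vH]
  have f6 : br (vF : Fin 3 → F) vH = (2 : F) • vF := by
    funext i; fin_cases i <;> simp [br, vF, vH]
  -- get all three basis vectors into W
  have key : (vE : Fin 3 → F) ∈ W ∧ (vH : Fin 3 → F) ∈ W ∧ (vF : Fin 3 → F) ∈ W := by
    by_cases h0 : w 0 ≠ 0
    · have hF : (vF : Fin 3 → F) ∈ W := by
        have := hW vF (br vF w) (hW vF w hwW)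
        rw [f1] at this
        exact (Submodule.smul_mem_iff _ (by simpa using h0)).mp this
      have hH : (vH : Fin 3 → F) ∈ W := f3 ▸ hW vE vF hF
      have hE : (vE : Fin 3 → F) ∈ W := by
        have := hW vE vH hH
        rw [f5] at this
        exact (Submodule.smul_mem_iff _ (by norm_num)).mp this
      exact ⟨hE, hH, hF⟩
    · push_neg at h0
      by_cases h2 : w 2 ≠ 0
      · have hE : (vE : Fin 3 → F) ∈ W := by
          have := hW vE (br vE w) (hW vE w hwW)
          rw [f2] at this
          exact (Submodule.smul_mem_iff _ (by simpa using h2)).mp this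
        have hH : (vH : Fin 3 → F) ∈ W := by
          have := hW vF vE hE
          rw [f4] at this
          simpa using neg_mem this
        have hF : (vF : Fin 3 → F) ∈ W := by
          have := hW vF vH hH
          rw [f6] at this
          exact (Submodule.smul_mem_iff _ (by norm_num)).mp this
        exact ⟨hE, hH, hF⟩
      · push_neg at h2
        have h1 : w 1 ≠ 0 := by
          intro h1
          apply hw0
          funext i; fin_cases i <;> simp [h0, h1, h2]
        have hw : w = w 1 • vH := by
          funext i; fin_cases i <;> simp [vH, h0, h2]
        have hH : (vH : Fin 3 → F) ∈ W := by
          rw [hw] at hwW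
          exact (Submodule.smul_mem_iff _ h1).mp hwW
        have hE : (vE : Fin 3 → F) ∈ W := by
          have := hW vE vH hH
          rw [f5] at this
          exact (Submodule.smul_mem_iff _ (by norm_num)).mp this
        have hF : (vF : Fin 3 → F) ∈ W := by
          have := hW vF vH hH
          rw [f6] at this
          exact (Submodule.smul_mem_iff _ (by norm_num)).mp this
        exact ⟨hE, hH, hF⟩
  obtain ⟨hE, hH, hF⟩ := key
  rw [eq_top_iff]
  intro v _
  have hv : v = v 0 • vE + v 1 • vH + v 2 • vF := by
    funext i; fin_cases i <;> simp [vE, vH, vF]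
  rw [hv]
  exact add_mem (add_mem (Submodule.smul_mem _ _ hE) (Submodule.smul_mem _ _ hH))
    (Submodule.smul_mem _ _ hF)

end Sl2

lemma p_surj (v : Fin 3 → F) : ∃ y : P.carrier, p P y = v := by
  refine ⟨v 0 • P.basis (Sum.inl 0) + v 1 • P.basis (Sum.inl 1) + v 2 • P.basis (Sum.inl 2), ?_⟩
  funext i
  simp only [map_add, map_smul, p_basis_inl, Pi.add_apply, Pi.smul_apply, smul_eq_mul]
  fin_cases i <;> simp [Fin.ext_iff]


lemma brEF : br (vE : Fin 3 → F) vF = vH := by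
  funext i; fin_cases i <;> simp [br, vE, vF, vH]

lemma vH_ne_zero : (vH : Fin 3 → F) ≠ 0 := by
  intro h
  have := congrFun h 1
  simp [vH] at this

lemma solvable_le [CharZero F] (I : LieIdeal F P.carrier)
    (hs : LieAlgebra.IsSolvable I) : (I : Submodule F P.carrier) ≤ Z P := by
  by_contra hn
  obtain ⟨k, hk⟩ := (LieAlgebra.isSolvable_iff F I).mp hs
  rw [LieIdeal.derivedSeries_eq_bot_iff] at hk
  have key : ∀ k, ∃ x ∈ LieAlgebra.derivedSeriesOfIdeal F P.carrier k I, p P x ≠ 0 := by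
    intro k
    induction k with
    | zero =>
      rw [SetLike.le_def] at hn
      push_neg at hn
      obtain ⟨x, hxI, hxZ⟩ := hn
      exact ⟨x, hxI, fun h => hxZ (mem_of_p_eq_zero P h)⟩
    | succ k ih =>
      obtain ⟨x, hx, hpx⟩ := ih
      set D := LieAlgebra.derivedSeriesOfIdeal F P.carrier k I with hD
      set W : Submodule F (Fin 3 → F)
        := Submodule.map (p P) (D : Submodule F P.carrier) with hWdef
      have hW : ∀ v w, w ∈ W → br v w ∈ W := by
        intro v w hw
        obtain ⟨m, hm, rfl⟩ := hw
        obtain ⟨y, rfl⟩ := p_surj P v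
        rw [← p_bracket]
        exact ⟨⁅y, m⁆, D.lie_mem hm, rfl⟩
      have hne : W ≠ ⊥ := by
        intro h
        apply hpx
        have hmem : p P x ∈ W := ⟨x, hx, rfl⟩
        rw [h] at hmem
        simpa using hmem
      have htop := br_stable_top W hW hne
      have hEW : (vE : Fin 3 → F) ∈ W := by rw [htop]; trivial
      have hFW : (vF : Fin 3 → F) ∈ W := by rw [htop]; trivial
      obtain ⟨x1, hx1, hpx1⟩ := hEW
      obtain ⟨x2, hx2, hpx2⟩ := hFW
      refine ⟨⁅x1, x2⁆, ?_, ?_⟩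
      · rw [LieAlgebra.derivedSeriesOfIdeal_succ]
        exact LieSubmodule.lie_mem_lie hx1 hx2
      · rw [p_bracket, hpx1, hpx2, brEF]
        exact vH_ne_zero
  obtain ⟨x, hx, hpx⟩ := key k
  rw [hk] at hx
  rw [LieSubmodule.mem_bot] at hx
  subst hx
  exact hpx (map_zero _)


lemma pE : p P (P.basis (Sum.inl 0)) = vE := by
  rw [p_basis_inl]; funext i; fin_cases i <;> simp [vE]

lemma pH : p P (P.basis (Sum.inl 1)) = vH := by
  rw [p_basis_inl]; funext i; fin_cases i <;> simp [vH]

lemma pF : p P (P.basis (Sum.inl 2)) = vF := by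
  rw [p_basis_inl]; funext i; fin_cases i <;> simp [vF]

lemma coord_f (j : ℕ) (h1 : 1 ≤ j) (h2 : j ≤ Λ) (x : P.carrier) :
    P.basis.repr ⁅P.basis (Sum.inl 2), x⁆ (Sum.inr ⟨j, by omega⟩)
      = P.basis.repr x (Sum.inr ⟨j - 1, by omega⟩) := by
  have hx : x ∈ Submodule.span F (Set.range P.basis) := by rw [P.basis.span_eq]; trivial
  induction hx using Submodule.span_induction with
  | mem y hy =>
    obtain ⟨i, rfl⟩ := hy
    rcases i with m | j'
    · fin_cases m
      · show P.basis.repr ⁅P.basis (Sum.inl 2), P.basis (Sum.inl 0)⁆ _ = _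
        rw [← lie_skew, P.rel_ef]
        simp [Module.Basis.repr_self, Finsupp.single_apply]
      · show P.basis.repr ⁅P.basis (Sum.inl 2), P.basis (Sum.inl 1)⁆ _ = _
        rw [← lie_skew, P.rel_hf]
        simp [Module.Basis.repr_self, Finsupp.single_apply]
      · show P.basis.repr ⁅P.basis (Sum.inl 2), P.basis (Sum.inl 2)⁆ _ = _
        rw [lie_self]
        simp [Module.Basis.repr_self, Finsupp.single_apply]
    · obtain ⟨jv, hjv⟩ := j'
      rcases lt_or_ge jv Λ with h | h
      · rw [P.rel_fz jv h]
        simp only [Module.Basis.repr_self, Finsupp.single_apply, Sum.inr.injEq, Fin.mk.injEq]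
        split_ifs with hA hB hB <;> first | rfl | omega
      · have hj : jv = Λ := by omega
        subst hj
        rw [P.rel_fzTop]
        simp only [map_zero, Finsupp.coe_zero, Pi.zero_apply, Module.Basis.repr_self,
          Finsupp.single_apply, Sum.inr.injEq, Fin.mk.injEq]
        split_ifs with hA <;> first | rfl | omega
  | zero => simp
  | add a b _ _ ha hb =>
      rw [lie_add, map_add]
      simp only [Finsupp.add_apply]
      rw [ha, hb, map_add]
      simp only [Finsupp.add_apply]
  | smul c a _ ha =>
      rw [lie_smul, map_smul]
      simp only [Finsupp.smul_apply, smul_eq_mul]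
      rw [ha, map_smul]
      simp only [Finsupp.smul_apply, smul_eq_mul]

lemma coord_e (j : ℕ) (h1 : 1 ≤ j) (h2 : j ≤ Λ) (x : P.carrier) :
    P.basis.repr ⁅P.basis (Sum.inl 0), x⁆ (Sum.inr ⟨j - 1, by omega⟩)
      = ((j * (Λ - j + 1) : ℕ) : F) * P.basis.repr x (Sum.inr ⟨j, by omega⟩) := by
  have hx : x ∈ Submodule.span F (Set.range P.basis) := by rw [P.basis.span_eq]; trivial
  induction hx using Submodule.span_induction with
  | mem y hy =>
    obtain ⟨i, rfl⟩ := hy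
    rcases i with m | j'
    · fin_cases m
      · show P.basis.repr ⁅P.basis (Sum.inl 0), P.basis (Sum.inl 0)⁆ _ = _
        rw [lie_self]
        simp [Module.Basis.repr_self, Finsupp.single_apply]
      · show P.basis.repr ⁅P.basis (Sum.inl 0), P.basis (Sum.inl 1)⁆ _ = _
        rw [← lie_skew, P.rel_he]
        simp [Module.Basis.repr_self, Finsupp.single_apply]
      · show P.basis.repr ⁅P.basis (Sum.inl 0), P.basis (Sum.inl 2)⁆ _ = _
        rw [P.rel_ef]
        simp [Module.Basis.repr_self, Finsupp.single_apply]
    · obtain ⟨jv, hjv⟩ := j'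
      rw [P.rel_ez jv (by omega)]
      simp only [map_nsmul, Finsupp.smul_apply, Module.Basis.repr_self, Finsupp.single_apply,
        Sum.inr.injEq, Fin.mk.injEq, smul_eq_mul]
      split_ifs with hA hB hB
      · have : jv = j := by omega
        subst this; push_cast; ring
      · have : jv = 0 := by omega
        subst this; push_cast; ring
      · omega
      · push_cast; ring
  | zero => simp
  | add a b _ _ ha hb =>
      rw [lie_add, map_add]
      simp only [Finsupp.add_apply]
      rw [ha, hb, map_add]
      simp only [Finsupp.add_apply]
      ring
  | smul c a _ ha =>
      rw [lie_smul, map_smul]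
      simp only [Finsupp.smul_apply, smul_eq_mul]
      rw [ha, map_smul]
      simp only [Finsupp.smul_apply, smul_eq_mul]
      ring

lemma center_eq_bot [CharZero F] (hΛ : 1 ≤ Λ) : LieAlgebra.center F P.carrier = ⊥ := by
  rw [LieSubmodule.eq_bot_iff]
  intro x hx
  have hx' : ∀ y : P.carrier, ⁅y, x⁆ = 0 :=
    (LieModule.mem_maxTrivSubmodule F P.carrier P.carrier x).mp hx
  have hbrH : br (vH : Fin 3 → F) (p P x) = 0 := by
    rw [← pH, ← p_bracket, hx' _, map_zero]
  have hbrE : br (vE : Fin 3 → F) (p P x) = 0 := by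
    rw [← pE, ← p_bracket, hx' _, map_zero]
  have h0 : p P x 0 = 0 := by
    have := congrFun hbrH 0
    simp [br, vH] at this
    exact this
  have h2 : p P x 2 = 0 := by
    have := congrFun hbrH 2
    simp [br, vH] at this
    exact this
  have h1 : p P x 1 = 0 := by
    have := congrFun hbrE 0
    simp [br, vE] at this
    exact this
  have hzlt : ∀ j : ℕ, ∀ hj : j < Λ, P.basis.repr x (Sum.inr ⟨j, by omega⟩) = 0 := by
    intro j hj
    have := coord_f P (j + 1) (by omega) (by omega) x
    rw [hx' _] at this
    simp only [map_zero, Finsupp.coe_zero, Pi.zero_apply] at this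
    have he : (⟨j + 1 - 1, by omega⟩ : Fin (Λ + 1)) = ⟨j, by omega⟩ := by
      simp
    rw [he] at this
    exact this.symm
  have hztop : P.basis.repr x (Sum.inr ⟨Λ, by omega⟩) = 0 := by
    have := coord_e P Λ (by omega) (by omega) x
    rw [hx' _] at this
    simp only [map_zero, Finsupp.coe_zero, Pi.zero_apply] at this
    have hcoef : ((Λ * (Λ - Λ + 1) : ℕ) : F) ≠ 0 := by
      have : (Λ * (Λ - Λ + 1) : ℕ) = Λ := by simp
      rw [this]
      exact_mod_cast Nat.cast_ne_zero.mpr (by omega)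
    rcases mul_eq_zero.mp this.symm with h | h
    · exact absurd h hcoef
    · exact h
  rw [P.basis.ext_elem_iff]
  intro i
  simp only [map_zero, Finsupp.coe_zero, Pi.zero_apply]
  rcases i with m | j
  · fin_cases m
    · exact h0
    · exact h1
    · exact h2
  · obtain ⟨jv, hjv⟩ := j
    rcases lt_or_ge jv Λ with h | h
    · exact hzlt jv h
    · have : jv = Λ := by omega
      subst this
      exact hztop


lemma lie_zero_of_mem {x y : P.carrier} (hx : x ∈ Z P) (hy : y ∈ Z P) : ⁅x, y⁆ = 0 := by
  induction hy using Submodule.span_induction with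
  | mem w hw =>
    obtain ⟨j, rfl⟩ := hw
    induction hx using Submodule.span_induction with
    | mem v hv => obtain ⟨j', rfl⟩ := hv; exact P.rel_zz j' j
    | zero => rw [zero_lie]
    | add a b _ _ ha hb => rw [add_lie, ha, hb, add_zero]
    | smul c a _ ha => rw [smul_lie, ha, smul_zero]
  | zero => rw [lie_zero]
  | add a b _ _ ha hb => rw [lie_add, ha, hb, add_zero]
  | smul c a _ ha => rw [lie_smul, ha, smul_zero]

lemma abelian : IsLieAbelian (Rideal P) := by
  rw [LieSubmodule.lie_abelian_iff_lie_self_eq_bot, LieSubmodule.lie_eq_bot_iff]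
  intro a ha m hm
  exact lie_zero_of_mem P ha hm

end SL2Aux

/-- The Lie algebra `sl₂^Λ` is not reductive: its radical
`R = Fz_0 ⊕ ⋯ ⊕ Fz_Λ` is nonzero and not contained in the center; in fact the center of
`sl₂^Λ` is trivial, so the radical differs from the center. -/
theorem sl2Lam_not_reductive
    (F : Type) [Field F] [CharZero F] (Λ : ℕ) (hΛ : 1 ≤ Λ) (P : SL2Lam F Λ) :
    ∃ R : LieIdeal F P.carrier,
      (R : Submodule F P.carrier)
        = Submodule.span F (Set.range fun j : Fin (Λ + 1) => P.basis (Sum.inr j)) ∧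
      R = LieAlgebra.radical F P.carrier ∧
      R ≠ ⊥ ∧
      ¬ R ≤ LieAlgebra.center F P.carrier ∧
      LieAlgebra.center F P.carrier = ⊥ ∧
      LieAlgebra.radical F P.carrier ≠ LieAlgebra.center F P.carrier := by

  classical
  haveI : Module.Finite F P.carrier := Module.Finite.of_basis P.basis
  haveI : IsNoetherian F P.carrier := isNoetherian_of_isNoetherianRing_of_finite F P.carrier
  haveI habel : IsLieAbelian (SL2Aux.Rideal P) := SL2Aux.abelian P
  have hrad : SL2Aux.Rideal P = LieAlgebra.radical F P.carrier := by
    apply le_antisymm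
    · exact (LieAlgebra.LieIdeal.solvable_iff_le_radical (R := F) P.carrier (SL2Aux.Rideal P)).mp inferInstance
    · intro x hx
      exact SL2Aux.solvable_le P (LieAlgebra.radical F P.carrier) inferInstance hx
  have hcenter : LieAlgebra.center F P.carrier = ⊥ := SL2Aux.center_eq_bot P hΛ
  have hne : SL2Aux.Rideal P ≠ ⊥ := by
    intro h
    have hz : P.basis (Sum.inr (0 : Fin (Λ + 1))) ∈ SL2Aux.Rideal P := SL2Aux.z_mem P 0
    rw [h, LieSubmodule.mem_bot] at hz
    exact P.basis.ne_zero _ hz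
  refine ⟨SL2Aux.Rideal P, rfl, hrad, hne, ?_, hcenter, ?_⟩
  · rw [hcenter]
    intro hle
    exact hne (le_bot_iff.mp hle)
  · rw [← hrad, hcenter]
    exact hne
end
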